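/- Let ℏ > 0, m ≥ 1, C ∈ M_m(ℂ), and define F : ℂ × ℂ^m × ℂ^m → ℂ by F(t,u,v) = exp((1/(iℏ)) ∑_{k,l} (e^{itC} − I)_{kl} u_k v_l), where e^{itC} is the matrix exponential. Then F(0,u,v) = 1 identically and F solves the evolution equation ∂_t F(t,u,v) = (i/(iℏ)) [ (∑_{k,l} C_{kl} u_k v_l)·F(t,u,v) + iℏ ∑_{j=1}^m (∑_k C_{kj} u_k) ∂_{u_j}F(t,u,v) ]. (The right-hand side is (i/(iℏ)) times the finite ΨDO product of the quadratic polynomial ∑ C_{kl}u_kv_l with F, so F is the normal ordered expression of the star-exponential e_*^{(it/(iℏ)) ∑ C_{kl} ũ_k * ṽ_l}.) -/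

import Mathlib

/-- Functions on `ℂ^{2m}`, written as functions of `(u, v)` with `u, v : Fin m → ℂ`. -/
abbrev HolFn (m : ℕ) := (Fin m → ℂ) → (Fin m → ℂ) → ℂ

/-- Partial derivative `∂_{u_j}`. -/
noncomputable def pdU (m : ℕ) (j : Fin m) (f : HolFn m) : HolFn m :=
  fun u v => fderiv ℂ (fun w => f w v) u (Pi.single j 1)

/-- The normal ordered expression of the star-exponential
`e_*^{(it/(iℏ)) ∑ C_{kl} ũ_k * ṽ_l}`, namely
`F(t,u,v) = exp((1/(iℏ)) ∑ (e^{itC} − I)_{kl} u_k v_l)` with `e^{itC}` the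
matrix exponential. -/
noncomputable def starExpC (ℏ : ℝ) (m : ℕ) (C : Matrix (Fin m) (Fin m) ℂ)
    (t : ℂ) : HolFn m :=
  fun u v => Complex.exp ((1 / (Complex.I * ℏ)) *
    ∑ k, ∑ l, (NormedSpace.exp ((Complex.I * t) • C) - 1) k l * u k * v l)

lemma entry_exp_hasDerivAt {m : ℕ} (C : Matrix (Fin m) (Fin m) ℂ) (t : ℂ) (k l : Fin m) :
    HasDerivAt (fun s : ℂ => NormedSpace.exp ((Complex.I * s) • C) k l)
      (Complex.I * ((C * NormedSpace.exp ((Complex.I * t) • C)) k l)) t := by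
  letI : SeminormedRing (Matrix (Fin m) (Fin m) ℂ) := Matrix.linftyOpSemiNormedRing
  letI : NormedRing (Matrix (Fin m) (Fin m) ℂ) := Matrix.linftyOpNormedRing
  letI : NormedAlgebra ℂ (Matrix (Fin m) (Fin m) ℂ) := Matrix.linftyOpNormedAlgebra
  have h1 : HasDerivAt (fun s : ℂ => NormedSpace.exp (s • C))
      (C * NormedSpace.exp ((Complex.I * t) • C)) (Complex.I * t) :=
    hasDerivAt_exp_smul_const' C (Complex.I * t)
  have h2 : HasDerivAt (fun s : ℂ => Complex.I * s) Complex.I t := by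
    simpa using (hasDerivAt_id t).const_mul Complex.I
  have h3 := h1.scomp t h2
  have h4 : HasDerivAt (fun s : ℂ => NormedSpace.exp ((Complex.I * s) • C) k l)
      ((Complex.I • (C * NormedSpace.exp ((Complex.I * t) • C))) k l) t := by
    rw [hasDerivAt_iff_tendsto_slope] at h3 ⊢
    have hc : Continuous (fun A : Matrix (Fin m) (Fin m) ℂ => A k l) :=
      (continuous_apply l).comp (continuous_apply k)
    exact (hc.tendsto _).comp h3
  simpa using h4

lemma pdU_starExpC (ℏ : ℝ) {m : ℕ} (C : Matrix (Fin m) (Fin m) ℂ) (t : ℂ)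
    (j : Fin m) (u v : Fin m → ℂ) :
    pdU m j (starExpC ℏ m C t) u v =
      ((1 / (Complex.I * ℏ)) *
        ∑ l, (NormedSpace.exp ((Complex.I * t) • C) - 1) j l * v l) *
        starExpC ℏ m C t u v := by
  set c : ℂ := 1 / (Complex.I * ℏ) with hc
  set A : Matrix (Fin m) (Fin m) ℂ := NormedSpace.exp ((Complex.I * t) • C) - 1 with hA
  set L : (Fin m → ℂ) →L[ℂ] ℂ :=
    ∑ k, (c * ∑ l, A k l * v l) • (ContinuousLinearMap.proj k) with hL
  have hLw : ∀ w : Fin m → ℂ, c * ∑ k, ∑ l, A k l * w k * v l = L w := by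
    intro w
    simp only [hL, ContinuousLinearMap.sum_apply, ContinuousLinearMap.smul_apply,
      ContinuousLinearMap.proj_apply, smul_eq_mul, Finset.mul_sum]
    refine Finset.sum_congr rfl fun k _ => ?_
    rw [Finset.sum_mul]
    exact Finset.sum_congr rfl fun l _ => by ring
  have hfun : (fun w => starExpC ℏ m C t w v) = fun w => Complex.exp (L w) := by
    funext w
    simp only [starExpC, ← hA, ← hc, hLw w]
  have hF : HasFDerivAt (fun w => starExpC ℏ m C t w v) (Complex.exp (L u) • L) u := by
    rw [hfun]
    exact (Complex.hasDerivAt_exp (L u)).comp_hasFDerivAt u L.hasFDerivAt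
  have hLs : L (Pi.single j 1) = c * ∑ l, A j l * v l := by
    simp [hL, Pi.single_apply, Finset.sum_ite_eq']
  rw [pdU, hF.fderiv]
  simp only [ContinuousLinearMap.smul_apply, smul_eq_mul, hLs]
  rw [congrFun hfun u]
  ring

theorem statement8 (ℏ : ℝ) (hℏ : 0 < ℏ) (m : ℕ) (hm : 1 ≤ m)
    (C : Matrix (Fin m) (Fin m) ℂ) :
    -- F(0,u,v) = 1
    (∀ u v : Fin m → ℂ, starExpC ℏ m C 0 u v = 1) ∧
    -- F solves the evolution equation of the star-exponential
    (∀ (t : ℂ) (u v : Fin m → ℂ),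
      HasDerivAt (fun s => starExpC ℏ m C s u v)
        ((Complex.I / (Complex.I * ℏ)) *
          ((∑ k, ∑ l, C k l * u k * v l) * starExpC ℏ m C t u v +
            (Complex.I * ℏ) *
              ∑ j, (∑ k, C k j * u k) * pdU m j (starExpC ℏ m C t) u v)) t) := by
  have hne : (Complex.I * (ℏ : ℂ)) ≠ 0 :=
    mul_ne_zero Complex.I_ne_zero (by exact_mod_cast hℏ.ne')
  constructor
  · intro u v
    simp [starExpC, NormedSpace.exp_zero]
  · intro t u v
    set c : ℂ := 1 / (Complex.I * ℏ) with hc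
    set E : Matrix (Fin m) (Fin m) ℂ := NormedSpace.exp ((Complex.I * t) • C) with hE
    have hS : HasDerivAt
        (fun s : ℂ => c * ∑ k, ∑ l,
          (NormedSpace.exp ((Complex.I * s) • C) - 1) k l * u k * v l)
        (c * ∑ k, ∑ l, (Complex.I * ((C * E) k l)) * u k * v l) t := by
      refine HasDerivAt.const_mul c ?_
      refine HasDerivAt.fun_sum fun k _ => ?_
      refine HasDerivAt.fun_sum fun l _ => ?_
      have h := (((entry_exp_hasDerivAt C t k l).sub_const
        ((1 : Matrix (Fin m) (Fin m) ℂ) k l)).mul_const (u k)).mul_const (v l)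
      simpa [Matrix.sub_apply] using h
    have hD : HasDerivAt (fun s => starExpC ℏ m C s u v)
        (Complex.exp (c * ∑ k, ∑ l, (E - 1) k l * u k * v l) *
          (c * ∑ k, ∑ l, (Complex.I * ((C * E) k l)) * u k * v l)) t := by
      have := (Complex.hasDerivAt_exp _).comp t hS
      simpa [starExpC, ← hc, ← hE, Function.comp_def] using this
    have hpd : ∀ j, pdU m j (starExpC ℏ m C t) u v =
        (c * ∑ l, (E - 1) j l * v l) * starExpC ℏ m C t u v := fun j =>
      pdU_starExpC ℏ C t j u v
    have hFval : starExpC ℏ m C t u v =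
        Complex.exp (c * ∑ k, ∑ l, (E - 1) k l * u k * v l) := by
      simp only [starExpC, ← hc, ← hE]
    set X : ℂ := Complex.exp (c * ∑ k, ∑ l, (E - 1) k l * u k * v l) with hX
    -- key algebraic identity
    have expand_right : ∀ j : Fin m, (∑ k, C k j * u k) * (∑ l, (E - 1) j l * v l)
        = (∑ k, ∑ l, C k j * u k * E j l * v l) - ∑ k, C k j * u k * v j := by
      intro j
      rw [Finset.sum_mul_sum, ← Finset.sum_sub_distrib]
      refine Finset.sum_congr rfl fun k _ => ?_
      have : ∀ l, C k j * u k * ((E - 1) j l * v l)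
          = C k j * u k * E j l * v l
            - C k j * u k * ((if j = l then 1 else 0) * v l) := by
        intro l
        simp only [Matrix.sub_apply, Matrix.one_apply]
        ring
      simp only [this]
      rw [Finset.sum_sub_distrib]
      congr 1
      simp [mul_ite, Finset.sum_ite_eq]
    have key : ∑ k, ∑ l, (C * E) k l * u k * v l
        = (∑ k, ∑ l, C k l * u k * v l)
          + ∑ j, (∑ k, C k j * u k) * (∑ l, (E - 1) j l * v l) := by
      simp only [expand_right]
      rw [Finset.sum_sub_distrib]
      have h2 : ∑ j, ∑ k, C k j * u k * v j = ∑ k, ∑ l, C k l * u k * v l :=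
        Finset.sum_comm
      have h3 : ∑ k, ∑ l, (C * E) k l * u k * v l
          = ∑ j, ∑ k, ∑ l, C k j * u k * E j l * v l := by
        have step : ∀ k l : Fin m, (C * E) k l * u k * v l
            = ∑ j, C k j * u k * E j l * v l := by
          intro k l
          rw [Matrix.mul_apply, Finset.sum_mul, Finset.sum_mul]
          exact Finset.sum_congr rfl fun j _ => by ring
        simp only [step]
        calc ∑ k, ∑ l, ∑ j, C k j * u k * E j l * v l
            = ∑ k, ∑ j, ∑ l, C k j * u k * E j l * v l :=
              Finset.sum_congr rfl fun k _ => Finset.sum_comm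
          _ = ∑ j, ∑ k, ∑ l, C k j * u k * E j l * v l := Finset.sum_comm
      rw [h3, h2]; ring
    convert hD using 1
    simp only [hpd, hFval]
    set P : ℂ := ∑ k, ∑ l, C k l * u k * v l with hP
    set R : ℂ := ∑ j, (∑ k, C k j * u k) * (∑ l, (E - 1) j l * v l) with hR
    have e1 : ∑ j, (∑ k, C k j * u k) * ((c * ∑ l, (E - 1) j l * v l) * X)
        = c * R * X := by
      calc ∑ j, (∑ k, C k j * u k) * ((c * ∑ l, (E - 1) j l * v l) * X)
          = ∑ j, c * ((∑ k, C k j * u k) * (∑ l, (E - 1) j l * v l)) * X :=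
            Finset.sum_congr rfl fun j _ => by ring
        _ = c * R * X := by rw [← Finset.sum_mul, ← Finset.mul_sum]
    have e2 : ∑ k, ∑ l, Complex.I * (C * E) k l * u k * v l
        = Complex.I * ∑ k, ∑ l, (C * E) k l * u k * v l := by
      rw [Finset.mul_sum]
      refine Finset.sum_congr rfl fun k _ => ?_
      rw [Finset.mul_sum]
      exact Finset.sum_congr rfl fun l _ => by ring
    rw [e1, e2, key, hc]
    have hℏc : (ℏ : ℂ) ≠ 0 := by exact_mod_cast hℏ.ne'
    field_simp
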